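/- Let X₁, ..., Xₙ be independent Poisson random variables with parameters μ₁, ..., μₙ, and Y₁, ..., Yₙ independent Poisson random variables with parameters μ₁*, ..., μₙ*, all parameters positive. If (μ₁, ..., μₙ) majorizes (μ₁*, ..., μₙ*), then max(X₁,...,Xₙ) ≥_st max(Y₁,...,Yₙ), i.e., for every nonnegative integer r, P(max Xᵢ ≤ r) ≤ P(max Yᵢ ≤ r). -/

import Mathlib

open MeasureTheory ProbabilityTheory

/-- `x` majorizes `y`. -/
def Majorizes {n : ℕ} (x y : Fin n → ℝ) : Prop :=
  (∀ s : Finset (Fin n), ∃ t : Finset (Fin n),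
      t.card = s.card ∧ ∑ i ∈ s, y i ≤ ∑ i ∈ t, x i) ∧
  ∑ i, x i = ∑ i, y i

namespace PoissonAux

open Finset ENNReal

/-- Abel summation nonnegativity. -/
lemma abel_nonneg (n : ℕ) (b d : ℕ → ℝ)
    (hbmono : ∀ i, i + 1 < n → b (i + 1) ≤ b i)
    (hD : ∀ k, k ≤ n → 0 ≤ ∑ i ∈ range k, d i)
    (hDn : ∑ i ∈ range n, d i = 0) :
    0 ≤ ∑ i ∈ range n, b i * d i := by
  have h := Finset.sum_range_by_parts b d n
  simp only [smul_eq_mul] at h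
  rw [h, hDn, mul_zero, zero_sub, neg_nonneg]
  apply Finset.sum_nonpos
  intro i hi
  rw [Finset.mem_range] at hi
  have h1 : i + 1 < n := by omega
  exact mul_nonpos_of_nonpos_of_nonneg (sub_nonpos.2 (hbmono i h1)) (hD (i+1) (by omega))

/-- top-k dominance -/
lemma sum_le_sum_upclosed {n : ℕ} (v : Fin n → ℝ) (t s : Finset (Fin n))
    (hcard : t.card = s.card)
    (hup : ∀ i ∈ s, ∀ j ∉ s, v j ≤ v i) :
    ∑ i ∈ t, v i ≤ ∑ i ∈ s, v i := by
  classical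
  have ht : ∑ i ∈ t, v i = ∑ i ∈ t ∩ s, v i + ∑ i ∈ t \ s, v i :=
    (Finset.sum_inter_add_sum_sdiff t s v).symm
  have hs : ∑ i ∈ s, v i = ∑ i ∈ t ∩ s, v i + ∑ i ∈ s \ t, v i := by
    rw [Finset.inter_comm]
    exact (Finset.sum_inter_add_sum_sdiff s t v).symm
  have hcard2 : (t \ s).card = (s \ t).card := by
    have h1 := Finset.card_sdiff_add_card_inter t s
    have h2 := Finset.card_sdiff_add_card_inter s t
    rw [Finset.inter_comm] at h2
    omega
  have key : ∑ i ∈ t \ s, v i ≤ ∑ i ∈ s \ t, v i := by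
    rcases (s \ t).eq_empty_or_nonempty with he | hne
    · have h0 : (t \ s) = ∅ := Finset.card_eq_zero.mp (by rw [hcard2, he]; simp)
      simp [h0, he]
    · obtain ⟨i₀, hi₀, hmin⟩ := Finset.exists_min_image (s \ t) v hne
      have h1 : ∑ i ∈ t \ s, v i ≤ (t \ s).card • v i₀ := by
        apply Finset.sum_le_card_nsmul
        intro j hj
        exact hup i₀ (Finset.mem_sdiff.mp hi₀).1 j (Finset.mem_sdiff.mp hj).2
      have h2 : (s \ t).card • v i₀ ≤ ∑ i ∈ s \ t, v i :=
        Finset.card_nsmul_le_sum _ _ _ hmin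
      calc ∑ i ∈ t \ s, v i ≤ (t \ s).card • v i₀ := h1
        _ = (s \ t).card • v i₀ := by rw [hcard2]
        _ ≤ ∑ i ∈ s \ t, v i := h2
  linarith


noncomputable def psum (r : ℕ) (μ : ℝ) : ℝ := ∑ k ∈ range (r+1), μ^k / (k.factorial : ℝ)

noncomputable def F (r : ℕ) (μ : ℝ) : ℝ := Real.exp (-μ) * psum r μ

noncomputable def G (r : ℕ) (μ : ℝ) : ℝ := -(μ^r / (r.factorial : ℝ)) / psum r μ

lemma psum_pos (r : ℕ) {μ : ℝ} (hμ : 0 ≤ μ) : 0 < psum r μ := by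
  apply Finset.sum_pos' (fun k _ => by positivity)
  exact ⟨0, by simp, by norm_num⟩

lemma F_pos (r : ℕ) {μ : ℝ} (hμ : 0 ≤ μ) : 0 < F r μ :=
  mul_pos (Real.exp_pos _) (psum_pos r hμ)

lemma F_le_one (r : ℕ) {μ : ℝ} (hμ : 0 ≤ μ) : F r μ ≤ 1 := by
  have h1 : psum r μ ≤ Real.exp μ := Real.sum_le_exp_of_nonneg hμ (r+1)
  have h2 : F r μ ≤ Real.exp (-μ) * Real.exp μ :=
    mul_le_mul_of_nonneg_left h1 (Real.exp_pos _).le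
  rwa [← Real.exp_add, neg_add_cancel, Real.exp_zero] at h2

lemma hasDerivAt_psum (r : ℕ) (μ : ℝ) :
    HasDerivAt (psum r) (∑ k ∈ range r, μ^k / (k.factorial : ℝ)) μ := by
  induction r with
  | zero =>
    have h : psum 0 = fun _ : ℝ => (1 : ℝ) := by
      funext t; simp [psum]
    rw [h]
    simpa using hasDerivAt_const μ (1 : ℝ)
  | succ r ih =>
    have h : psum (r+1) = fun t => psum r t + t^(r+1) / ((r+1).factorial : ℝ) := by
      funext t; simp [psum, Finset.sum_range_succ]
    rw [h]
    have hpow : HasDerivAt (fun t : ℝ => t^(r+1) / ((r+1).factorial : ℝ))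
        ((↑(r+1) * μ^r) / ((r+1).factorial : ℝ)) μ := by
      simpa using (hasDerivAt_pow (r+1) μ).div_const ((r+1).factorial : ℝ)
    have := ih.add hpow
    refine this.congr_deriv ?_
    rw [Finset.sum_range_succ]
    congr 1
    rw [Nat.factorial_succ]
    have h1 : ((r+1 : ℕ) : ℝ) ≠ 0 := by positivity
    have h2 : ((r.factorial : ℕ) : ℝ) ≠ 0 := by positivity
    push_cast
    field_simp

lemma hasDerivAt_logF (r : ℕ) {μ : ℝ} (hμ : 0 < μ) :
    HasDerivAt (fun t => Real.log (F r t)) (G r μ) μ := by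
  have hexp : HasDerivAt (fun t : ℝ => Real.exp (-t)) (Real.exp (-μ) * (-1)) μ :=
    (hasDerivAt_neg μ).exp
  have hF : HasDerivAt (F r)
      (Real.exp (-μ) * (-1) * psum r μ + Real.exp (-μ) * (∑ k ∈ range r, μ^k / (k.factorial : ℝ))) μ :=
    hexp.mul (hasDerivAt_psum r μ)
  have hFpos := F_pos r hμ.le
  have hlog := hF.log (ne_of_gt hFpos)
  convert hlog using 1
  have hS : psum r μ = (∑ k ∈ range r, μ^k / (k.factorial : ℝ)) + μ^r / (r.factorial : ℝ) := by
    simp [psum, Finset.sum_range_succ]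
  have hSpos := psum_pos r hμ.le
  have hE := Real.exp_pos (-μ)
  rw [G, F, hS]
  field_simp
  ring

lemma G_nonpos (r : ℕ) {μ : ℝ} (hμ : 0 < μ) : G r μ ≤ 0 := by
  apply div_nonpos_of_nonpos_of_nonneg
  · have : (0:ℝ) ≤ μ^r / (r.factorial : ℝ) := by positivity
    linarith
  · exact (psum_pos r hμ.le).le

lemma G_antitone (r : ℕ) {a b : ℝ} (ha : 0 < a) (hab : a ≤ b) : G r b ≤ G r a := by
  have hb : 0 < b := lt_of_lt_of_le ha hab
  have hSa := psum_pos r ha.le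
  have hSb := psum_pos r hb.le
  rw [G, G, neg_div, neg_div, neg_le_neg_iff, div_le_div_iff₀ hSa hSb]
  have key : ∀ k ∈ range (r+1), a^r / (r.factorial:ℝ) * (b^k / (k.factorial:ℝ)) ≤
      b^r / (r.factorial:ℝ) * (a^k / (k.factorial:ℝ)) := by
    intro k hk
    rw [Finset.mem_range] at hk
    have hkr : k ≤ r := by omega
    have e1 : a^r = a^k * a^(r-k) := by rw [← pow_add]; congr 1; omega
    have e2 : b^r = b^k * b^(r-k) := by rw [← pow_add]; congr 1; omega
    have h3 : a^(r-k) ≤ b^(r-k) := pow_le_pow_left₀ ha.le hab _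
    have h4 : a^r * b^k ≤ b^r * a^k := by
      rw [e1, e2]
      calc a^k * a^(r-k) * b^k = (a^k * b^k) * a^(r-k) := by ring
        _ ≤ (a^k * b^k) * b^(r-k) :=
          mul_le_mul_of_nonneg_left h3 (by positivity)
        _ = b^k * b^(r-k) * a^k := by ring
    have hrf : (0:ℝ) < (r.factorial : ℝ) := by positivity
    have hkf : (0:ℝ) < (k.factorial : ℝ) := by positivity
    rw [div_mul_div_comm, div_mul_div_comm, div_le_div_iff₀ (by positivity) (by positivity)]
    calc a^r * b^k * ((r.factorial:ℝ) * (k.factorial:ℝ))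
        ≤ b^r * a^k * ((r.factorial:ℝ) * (k.factorial:ℝ)) := by
          apply mul_le_mul_of_nonneg_right h4 (by positivity)
      _ = b^r * a^k * ((r.factorial:ℝ) * (k.factorial:ℝ)) := rfl
  calc a^r / (r.factorial:ℝ) * psum r b
      = ∑ k ∈ range (r+1), a^r / (r.factorial:ℝ) * (b^k / (k.factorial:ℝ)) := by
        rw [psum, Finset.mul_sum]
    _ ≤ ∑ k ∈ range (r+1), b^r / (r.factorial:ℝ) * (a^k / (k.factorial:ℝ)) :=
        Finset.sum_le_sum key
    _ = b^r / (r.factorial:ℝ) * psum r a := by rw [psum, Finset.mul_sum]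

lemma tangent (r : ℕ) {a b : ℝ} (ha : 0 < a) (hb : 0 < b) :
    Real.log (F r b) ≤ Real.log (F r a) + G r a * (b - a) := by
  set g : ℝ → ℝ := fun t => Real.log (F r t) with hg
  rcases lt_trichotomy a b with hab | hab | hab
  · have hcont : ContinuousOn g (Set.Icc a b) := fun t ht =>
      ((hasDerivAt_logF r (lt_of_lt_of_le ha ht.1)).continuousAt).continuousWithinAt
    obtain ⟨c, hc, hceq⟩ := exists_hasDerivAt_eq_slope g (fun t => G r t) hab hcont
      (fun t ht => hasDerivAt_logF r (ha.trans ht.1))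
    have hgc : g b - g a = G r c * (b - a) := by
      rw [hceq, div_mul_cancel₀]
      · linarith
    have hGc : G r c ≤ G r a := G_antitone r ha hc.1.le
    nlinarith [mul_le_mul_of_nonneg_right hGc (by linarith : (0:ℝ) ≤ b - a)]
  · subst hab; simp
  · have hcont : ContinuousOn g (Set.Icc b a) := fun t ht =>
      ((hasDerivAt_logF r (lt_of_lt_of_le hb ht.1)).continuousAt).continuousWithinAt
    obtain ⟨c, hc, hceq⟩ := exists_hasDerivAt_eq_slope g (fun t => G r t) hab hcont
      (fun t ht => hasDerivAt_logF r (hb.trans ht.1))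
    have hgc : g a - g b = G r c * (a - b) := by
      rw [hceq, div_mul_cancel₀]
      · linarith
    have hGc : G r a ≤ G r c := G_antitone r (hb.trans hc.1) hc.2.le
    nlinarith [mul_le_mul_of_nonneg_right hGc (by linarith : (0:ℝ) ≤ a - b)]


lemma sorted_partial {n : ℕ} (v : Fin n → ℝ) :
    ∃ w : Fin n → ℝ, Antitone w ∧ (∃ e : Equiv.Perm (Fin n), ∀ i, w i = v (e i)) ∧
      ∀ k, k ≤ n → ∃ s : Finset (Fin n), s.card = k ∧
        (∀ i ∈ s, ∀ j ∉ s, v j ≤ v i) ∧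
        ∑ i ∈ s, v i = ∑ i ∈ range k, (if h : i < n then w ⟨i, h⟩ else 0) := by
  classical
  set σ := Tuple.sort v with hσ
  have hm : Monotone (v ∘ σ) := Tuple.monotone_sort v
  set w : Fin n → ℝ := fun i => v (σ (Fin.rev i)) with hw
  have hanti : Antitone w := by
    intro i j hij
    exact hm (Fin.rev_le_rev.mpr hij)
  refine ⟨w, hanti, ⟨Fin.revPerm.trans σ, fun i => rfl⟩, ?_⟩
  intro k hk
  set emb : Fin k ↪ Fin n :=
    ⟨fun a => σ (Fin.rev (Fin.castLE hk a)), by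
      intro a b hab
      have := σ.injective hab
      have := Fin.rev_injective this
      exact Fin.castLE_injective hk this⟩ with hemb
  refine ⟨Finset.univ.map emb, by simp, ?_, ?_⟩
  · intro i hi j hj
    obtain ⟨a, _, ha⟩ := Finset.mem_map.mp hi
    set b : Fin n := Fin.rev (σ.symm j) with hb
    have hjb : σ (Fin.rev b) = j := by
      rw [hb, Fin.rev_rev, Equiv.apply_symm_apply]
    have hbk : ¬ (b : ℕ) < k := by
      intro hbk
      apply hj
      apply Finset.mem_map.mpr
      refine ⟨⟨b, hbk⟩, Finset.mem_univ _, ?_⟩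
      simp only [hemb, Function.Embedding.coeFn_mk]
      exact hjb
    have hab2 : Fin.castLE hk a ≤ b := by
      rw [Fin.le_def]
      simp only [Fin.coe_castLE]
      omega
    have := hanti hab2
    rw [← ha, ← hjb]
    exact this
  · rw [Finset.sum_map]
    have h1 : ∑ a : Fin k, v (emb a) = ∑ a : Fin k,
        (fun i : ℕ => if h : i < n then v (σ (Fin.rev ⟨i, h⟩)) else 0) (a : ℕ) := by
      apply Finset.sum_congr rfl
      intro a _
      have hak : (a : ℕ) < n := lt_of_lt_of_le a.2 hk
      simp only [hak, dif_pos]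
      rfl
    rw [h1]
    exact Fin.sum_univ_eq_sum_range (fun i : ℕ => if h : i < n then v (σ (Fin.rev ⟨i, h⟩)) else 0) k

lemma key (n r : ℕ) (x y : Fin n → ℝ) (hx : ∀ i, 0 < x i) (hy : ∀ i, 0 < y i)
    (hmaj : _root_.Majorizes x y) :
    ∏ i, F r (x i) ≤ ∏ i, F r (y i) := by
  classical
  obtain ⟨wx, hwxa, ⟨ex, hex⟩, hxs⟩ := sorted_partial x
  obtain ⟨wy, hwya, ⟨ey, hey⟩, hys⟩ := sorted_partial y
  set xd : ℕ → ℝ := fun i => if h : i < n then wx ⟨i, h⟩ else 0 with hxd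
  set yd : ℕ → ℝ := fun i => if h : i < n then wy ⟨i, h⟩ else 0 with hyd
  have hwxpos : ∀ i, 0 < wx i := fun i => by rw [hex]; exact hx _
  have hwypos : ∀ i, 0 < wy i := fun i => by rw [hey]; exact hy _
  have hpart : ∀ k, k ≤ n → ∑ i ∈ range k, yd i ≤ ∑ i ∈ range k, xd i := by
    intro k hk
    obtain ⟨sy, hsyc, hsyup, hsysum⟩ := hys k hk
    obtain ⟨t, htc, hts⟩ := hmaj.1 sy
    obtain ⟨sx, hsxc, hsxup, hsxsum⟩ := hxs k hk
    have h2 : ∑ i ∈ t, x i ≤ ∑ i ∈ sx, x i :=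
      sum_le_sum_upclosed x t sx (by rw [htc, hsyc, hsxc]) hsxup
    calc ∑ i ∈ range k, yd i = ∑ i ∈ sy, y i := hsysum.symm
      _ ≤ ∑ i ∈ t, x i := hts
      _ ≤ ∑ i ∈ sx, x i := h2
      _ = ∑ i ∈ range k, xd i := hsxsum
  have htotx : ∑ i ∈ range n, xd i = ∑ i, x i := by
    rw [← Fin.sum_univ_eq_sum_range xd n]
    rw [show ∑ i : Fin n, xd ↑i = ∑ i : Fin n, x (ex i) from
      Finset.sum_congr rfl (fun i _ => by simp [hxd, i.is_lt, hex])]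
    exact Equiv.sum_comp ex x
  have htoty : ∑ i ∈ range n, yd i = ∑ i, y i := by
    rw [← Fin.sum_univ_eq_sum_range yd n]
    rw [show ∑ i : Fin n, yd ↑i = ∑ i : Fin n, y (ey i) from
      Finset.sum_congr rfl (fun i _ => by simp [hyd, i.is_lt, hey])]
    exact Equiv.sum_comp ey y
  set b : ℕ → ℝ := fun i => if h : i < n then -G r (wy ⟨i, h⟩) else 0 with hb
  have h2 : 0 ≤ ∑ i ∈ range n, b i * (xd i - yd i) := by
    apply abel_nonneg
    · intro i hi
      have hi1 : i < n := by omega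
      simp only [hb, dif_pos hi, dif_pos hi1, neg_le_neg_iff]
      apply G_antitone r (hwypos _)
      apply hwya
      simp [Fin.mk_le_mk]
    · intro k hk
      rw [Finset.sum_sub_distrib]
      have := hpart k hk; linarith
    · rw [Finset.sum_sub_distrib, htotx, htoty, hmaj.2]; ring
  have h3 : ∑ i : Fin n, G r (wy i) * (wx i - wy i) =
      -(∑ i ∈ range n, b i * (xd i - yd i)) := by
    rw [← Fin.sum_univ_eq_sum_range (fun i => b i * (xd i - yd i)) n,
      ← Finset.sum_neg_distrib]
    apply Finset.sum_congr rfl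
    intro i _
    simp only [hb, hxd, hyd, dif_pos i.is_lt, Fin.eta]
    ring
  have hsum : ∑ i, Real.log (F r (wx i)) ≤ ∑ i, Real.log (F r (wy i)) := by
    have h1 : ∑ i, Real.log (F r (wx i)) ≤
        ∑ i, (Real.log (F r (wy i)) + G r (wy i) * (wx i - wy i)) :=
      Finset.sum_le_sum fun i _ => tangent r (hwypos i) (hwxpos i)
    rw [Finset.sum_add_distrib, h3] at h1
    linarith
  calc ∏ i, F r (x i) = ∏ i, F r (wx i) := by
        rw [← Equiv.prod_comp ex (fun i => F r (x i))]
        exact Finset.prod_congr rfl fun i _ => by rw [hex]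
    _ = Real.exp (∑ i, Real.log (F r (wx i))) := by
        rw [Real.exp_sum]
        exact Finset.prod_congr rfl fun i _ => (Real.exp_log (F_pos r (hwxpos i).le)).symm
    _ ≤ Real.exp (∑ i, Real.log (F r (wy i))) := Real.exp_le_exp.2 hsum
    _ = ∏ i, F r (wy i) := by
        rw [Real.exp_sum]
        exact Finset.prod_congr rfl fun i _ => Real.exp_log (F_pos r (hwypos i).le)
    _ = ∏ i, F r (y i) := by
        rw [← Equiv.prod_comp ey (fun i => F r (y i))]
        exact Finset.prod_congr rfl fun i _ => by rw [hey]

lemma tail_summable (r : ℕ) (μ : ℝ) :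
    Summable (fun k : ℕ => Real.exp (-μ) * μ^(r+1+k) / ((r+1+k).factorial : ℝ)) := by
  have h0 := Real.summable_pow_div_factorial μ
  have h1 : Summable (fun k : ℕ => μ^(k+(r+1)) / ((k+(r+1)).factorial : ℝ)) :=
    (summable_nat_add_iff (f := fun k : ℕ => μ^k / (k.factorial : ℝ)) (r+1)).2 h0
  have h2 := h1.mul_left (Real.exp (-μ))
  apply h2.congr
  intro k
  rw [add_comm k (r+1), mul_div_assoc]

lemma tail_sum (r : ℕ) (μ : ℝ) :
    ∑' k : ℕ, Real.exp (-μ) * μ^(r+1+k) / ((r+1+k).factorial : ℝ) = 1 - F r μ := by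
  have hsum : Summable (fun k : ℕ => μ^k / (k.factorial : ℝ)) :=
    Real.summable_pow_div_factorial μ
  have hexp : ∑' k : ℕ, μ^k / (k.factorial : ℝ) = Real.exp μ := by
    rw [Real.exp_eq_exp_ℝ, NormedSpace.exp_eq_tsum_div]
  have hsplit := Summable.sum_add_tsum_nat_add (f := fun k : ℕ => μ^k / (k.factorial : ℝ)) (r+1) hsum
  rw [hexp] at hsplit
  have h1 : ∑' k : ℕ, Real.exp (-μ) * μ^(r+1+k) / ((r+1+k).factorial : ℝ)
      = Real.exp (-μ) * ∑' k : ℕ, μ^(k+(r+1)) / ((k+(r+1)).factorial : ℝ) := by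
    rw [← tsum_mul_left]
    apply tsum_congr
    intro k
    rw [add_comm k (r+1), mul_div_assoc]
  rw [h1, show (∑' k : ℕ, μ^(k+(r+1)) / ((k+(r+1)).factorial : ℝ))
      = Real.exp μ - ∑ k ∈ range (r+1), μ^k / (k.factorial : ℝ) by linarith]
  rw [F, psum, mul_sub, ← Real.exp_add]
  simp

end PoissonAux

open PoissonAux Finset ENNReal in
theorem poisson_max_stochastic_order {Ω : Type*} [MeasurableSpace Ω]
    (P : Measure Ω) [IsProbabilityMeasure P] (n : ℕ)
    (X Y : Fin n → Ω → ℕ) (μ μ' : Fin n → ℝ)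
    (hμ : ∀ i, 0 < μ i) (hμ' : ∀ i, 0 < μ' i)
    (hXind : iIndepFun X P)
    (hYind : iIndepFun Y P)
    (hX : ∀ i k, P {ω | X i ω = k} =
      ENNReal.ofReal (Real.exp (-μ i) * μ i ^ k / (k.factorial : ℝ)))
    (hY : ∀ i k, P {ω | Y i ω = k} =
      ENNReal.ofReal (Real.exp (-μ' i) * μ' i ^ k / (k.factorial : ℝ)))
    (hmaj : Majorizes μ μ') (r : ℕ) :
    P {ω | ∀ i, X i ω ≤ r} ≤ P {ω | ∀ i, Y i ω ≤ r} := by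
  classical
  have hXset : {ω | ∀ i, X i ω ≤ r} = ⋂ i, {ω | X i ω ≤ r} := by
    ext ω; simp [Set.mem_iInter]
  have hYset : {ω | ∀ i, Y i ω ≤ r} = ⋂ i, {ω | Y i ω ≤ r} := by
    ext ω; simp [Set.mem_iInter]
  have hXprod : P (⋂ i, {ω | X i ω ≤ r}) = ∏ i, P {ω | X i ω ≤ r} :=
    hXind.meas_iInter (fun i => ⟨{k | k ≤ r}, trivial, rfl⟩)
  have hYprod : P (⋂ i, {ω | Y i ω ≤ r}) = ∏ i, P {ω | Y i ω ≤ r} :=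
    hYind.meas_iInter (fun i => ⟨{k | k ≤ r}, trivial, rfl⟩)
  have hXle : ∀ i, P {ω | X i ω ≤ r} ≤ ENNReal.ofReal (F r (μ i)) := by
    intro i
    have hset : {ω | X i ω ≤ r} = ⋃ k ∈ Finset.range (r+1), {ω | X i ω = k} := by
      ext ω; simp [Nat.lt_succ_iff, eq_comm]
    rw [hset]
    refine (measure_biUnion_finset_le _ _).trans ?_
    rw [show ∑ k ∈ Finset.range (r+1), P {ω | X i ω = k}
        = ∑ k ∈ Finset.range (r+1),
          ENNReal.ofReal (Real.exp (-μ i) * μ i ^ k / (k.factorial : ℝ)) from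
      Finset.sum_congr rfl fun k _ => hX i k]
    rw [← ENNReal.ofReal_sum_of_nonneg (fun k _ =>
      div_nonneg (mul_nonneg (Real.exp_pos _).le (pow_nonneg (hμ i).le k)) (by positivity))]
    apply ENNReal.ofReal_le_ofReal
    rw [F, psum, Finset.mul_sum]
    apply le_of_eq
    exact Finset.sum_congr rfl fun k _ => by rw [mul_div_assoc]
  have hYge : ∀ i, ENNReal.ofReal (F r (μ' i)) ≤ P {ω | Y i ω ≤ r} := by
    intro i
    have hμi := hμ' i
    have htail : P {ω | ¬ Y i ω ≤ r} ≤ ENNReal.ofReal (1 - F r (μ' i)) := by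
      have hsub : {ω | ¬ Y i ω ≤ r} ⊆ ⋃ k : ℕ, {ω | Y i ω = r + 1 + k} := by
        intro ω hω
        simp only [Set.mem_setOf_eq, not_le] at hω
        exact Set.mem_iUnion.mpr ⟨Y i ω - (r+1), by simp only [Set.mem_setOf_eq]; omega⟩
      refine (measure_mono hsub).trans ((measure_iUnion_le _).trans ?_)
      have hcongr : ∀ k : ℕ, P {ω | Y i ω = r + 1 + k}
          = ENNReal.ofReal (Real.exp (-μ' i) * μ' i ^ (r+1+k) / ((r+1+k).factorial : ℝ)) :=
        fun k => hY i (r+1+k)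
      rw [tsum_congr hcongr,
        ← ENNReal.ofReal_tsum_of_nonneg (fun k =>
          div_nonneg (mul_nonneg (Real.exp_pos _).le (pow_nonneg (hμ' i).le _)) (by positivity))
          (tail_summable r (μ' i)),
        tail_sum r (μ' i)]
    have hcover : (1 : ℝ≥0∞) ≤ P {ω | Y i ω ≤ r} + P {ω | ¬ Y i ω ≤ r} := by
      have hsub : (Set.univ : Set Ω) ⊆ {ω | Y i ω ≤ r} ∪ {ω | ¬ Y i ω ≤ r} := by
        intro ω _
        by_cases h : Y i ω ≤ r
        · exact Or.inl h
        · exact Or.inr h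
      calc (1:ℝ≥0∞) = P Set.univ := (measure_univ).symm
        _ ≤ P ({ω | Y i ω ≤ r} ∪ {ω | ¬ Y i ω ≤ r}) := measure_mono hsub
        _ ≤ P {ω | Y i ω ≤ r} + P {ω | ¬ Y i ω ≤ r} := measure_union_le _ _
    have h5 : ENNReal.ofReal (F r (μ' i)) = 1 - ENNReal.ofReal (1 - F r (μ' i)) := by
      rw [← ENNReal.ofReal_one,
        ← ENNReal.ofReal_sub _ (by linarith [F_le_one r hμi.le] : (0:ℝ) ≤ 1 - F r (μ' i))]
      norm_num
    rw [h5, tsub_le_iff_right]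
    calc (1:ℝ≥0∞) ≤ P {ω | Y i ω ≤ r} + P {ω | ¬ Y i ω ≤ r} := hcover
      _ ≤ P {ω | Y i ω ≤ r} + ENNReal.ofReal (1 - F r (μ' i)) := add_le_add_right htail _
  rw [hXset, hYset, hXprod, hYprod]
  calc ∏ i, P {ω | X i ω ≤ r} ≤ ∏ i, ENNReal.ofReal (F r (μ i)) :=
        Finset.prod_le_prod' fun i _ => hXle i
    _ = ENNReal.ofReal (∏ i, F r (μ i)) :=
        (ENNReal.ofReal_prod_of_nonneg fun i _ => (F_pos r (hμ i).le).le).symm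
    _ ≤ ENNReal.ofReal (∏ i, F r (μ' i)) := ENNReal.ofReal_le_ofReal (key n r μ μ' hμ hμ' hmaj)
    _ = ∏ i, ENNReal.ofReal (F r (μ' i)) :=
        ENNReal.ofReal_prod_of_nonneg fun i _ => (F_pos r (hμ' i).le).le
    _ ≤ ∏ i, P {ω | Y i ω ≤ r} := Finset.prod_le_prod' fun i _ => hYge i
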